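/- Let d ≥ 2 and q = 2d−1. Define vectors in ℤ^{d−1} (with standard basis e₁,…,e_{d−1}): u₁ = q·e₁; uᵢ = eᵢ − i·e₁ for odd i with 2 ≤ i ≤ d−1; uᵢ = eᵢ + (q−i)·e₁ for even i with 2 ≤ i ≤ d−1. Then the subgroup of ℤ^{d−1} generated by u₁, …, u_{d−1} equals L̃_{d−1} = {a ∈ ℤ^{d−1} : Σ_{i=1}^{d−1} i·aᵢ ≡ 0 (mod 2d−1)}. -/

import Mathlib

/-- The generating vectors `u₁, …, u_{d−1}` of `ℤ^{d−1}` (0-indexed: `u` at index `j`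
is the vector `u_{j+1}` of the paper): `u₁ = q·e₁`; for `2 ≤ i ≤ d−1`,
`uᵢ = eᵢ − i·e₁` if `i` is odd and `uᵢ = eᵢ + (q−i)·e₁` if `i` is even, where
`q = 2d−1`. -/
def uvec (d : ℕ) (j : Fin (d - 1)) : Fin (d - 1) → ℤ :=
  if j.val = 0 then (2 * (d : ℤ) - 1) • Pi.single j 1
  else if Odd (j.val + 1) then
    Pi.single j 1 - ((j.val : ℤ) + 1) • Pi.single (⟨0, j.pos⟩ : Fin (d - 1)) 1
  else
    Pi.single j 1 + (2 * (d : ℤ) - 1 - ((j.val : ℤ) + 1)) • Pi.single (⟨0, j.pos⟩ : Fin (d - 1)) 1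

/-- The subgroup of `ℤ^{d−1}` generated by `u₁, …, u_{d−1}` is exactly the lifted code
`L̃_{d−1} = {a ∈ ℤ^{d−1} : Σᵢ i·aᵢ ≡ 0 (mod 2d−1)}`. -/
theorem closure_uvec_eq_Ltil (d : ℕ) (hd : 2 ≤ d) :
    (AddSubgroup.closure (Set.range (uvec d)) : Set (Fin (d - 1) → ℤ)) =
      {a | (2 * (d : ℤ) - 1) ∣ ∑ i : Fin (d - 1), ((i.val : ℤ) + 1) * a i} := by
  have hn : 0 < d - 1 := by omega
  set q : ℤ := 2 * (d : ℤ) - 1 with hq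
  set z : Fin (d - 1) := ⟨0, hn⟩ with hz
  set e0 : Fin (d - 1) → ℤ := Pi.single z 1 with he0
  let φ : (Fin (d - 1) → ℤ) →+ ℤ :=
    { toFun := fun a => ∑ i : Fin (d - 1), ((i.val : ℤ) + 1) * a i
      map_zero' := by simp
      map_add' := by intro a b; simp [mul_add, Finset.sum_add_distrib] }
  have hφ_single : ∀ (j : Fin (d - 1)) (c : ℤ), φ (Pi.single j c) = ((j.val : ℤ) + 1) * c := by
    intro j c
    simp only [φ, AddMonoidHom.coe_mk, ZeroHom.coe_mk]
    rw [Finset.sum_eq_single j]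
    · simp
    · intro b _ hb; simp [Pi.single_apply, hb.symm]
    · simp
  have hφ_gen : ∀ j, q ∣ φ (uvec d j) := by
    intro j
    unfold uvec
    split_ifs with h1 h2
    · rw [map_zsmul, hφ_single]; exact Dvd.intro _ rfl
    · rw [map_sub, map_zsmul, hφ_single, hφ_single]
      simp
    · rw [map_add, map_zsmul, hφ_single, hφ_single]
      refine ⟨1, ?_⟩
      simp only [Fin.val_mk, Nat.cast_zero, smul_eq_mul]
      ring
  ext a
  simp only [SetLike.mem_coe, Set.mem_setOf_eq]
  constructor
  · intro ha
    induction ha using AddSubgroup.closure_induction with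
    | mem x hx => obtain ⟨j, rfl⟩ := hx; exact hφ_gen j
    | zero => simp
    | add x y _ _ hx hy =>
        have h : ∑ i : Fin (d-1), ((i.val : ℤ) + 1) * (x + y) i
            = (∑ i : Fin (d-1), ((i.val : ℤ) + 1) * x i)
              + ∑ i : Fin (d-1), ((i.val : ℤ) + 1) * y i := by
          simp [mul_add, Finset.sum_add_distrib]
        rw [h]; exact dvd_add hx hy
    | neg x _ hx =>
        have h : ∑ i : Fin (d-1), ((i.val : ℤ) + 1) * (-x) i
            = -(∑ i : Fin (d-1), ((i.val : ℤ) + 1) * x i) := by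
          simp
        rw [h]; exact hx.neg_right
  · rintro ⟨k, hk⟩
    set v : Fin (d - 1) → Fin (d - 1) → ℤ :=
      fun j => Pi.single j 1 - ((j.val : ℤ) + 1) • e0 with hv
    have huz : uvec d z = q • e0 := by unfold uvec; rw [if_pos rfl]
    have hqe0 : (q • e0) ∈ AddSubgroup.closure (Set.range (uvec d)) := by
      rw [← huz]; exact AddSubgroup.subset_closure ⟨z, rfl⟩
    have hvmem : ∀ j, v j ∈ AddSubgroup.closure (Set.range (uvec d)) := by
      intro j
      by_cases h1 : j.val = 0
      · have hjz : j = z := Fin.ext h1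
        have hone : ((j.val : ℤ) + 1) = 1 := by rw [h1]; norm_num
        have h0 : v j = 0 := by
          rw [hv]; dsimp only
          rw [hone, one_smul, hjz, ← he0, sub_self]
        rw [h0]; exact zero_mem _
      · by_cases h2 : Odd (j.val + 1)
        · have h : v j = uvec d j := by
            unfold uvec; rw [if_neg h1, if_pos h2]
          rw [h]; exact AddSubgroup.subset_closure ⟨j, rfl⟩
        · have hu : uvec d j = Pi.single j 1 + (q - ((j.val : ℤ) + 1)) • e0 := by
            unfold uvec; rw [if_neg h1, if_neg h2]
          have h : v j = uvec d j - q • e0 := by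
            rw [hu, hv]; dsimp only
            rw [sub_smul]; abel
          rw [h]
          exact sub_mem (AddSubgroup.subset_closure ⟨j, rfl⟩) hqe0
    have hsum : (∑ j : Fin (d - 1), a j • v j) = a - (φ a) • e0 := by
      simp only [hv, smul_sub, Finset.sum_sub_distrib, smul_smul]
      congr 1
      · funext i
        simp only [Finset.sum_apply, Pi.smul_apply, smul_eq_mul, Pi.single_apply,
          mul_ite, mul_one, mul_zero]
        simp
      · rw [← Finset.sum_smul]
        congr 1
        simp only [φ, AddMonoidHom.coe_mk, ZeroHom.coe_mk]
        exact Finset.sum_congr rfl fun i _ => mul_comm _ _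
    have hφa : φ a = q * k := hk
    have key : a = (∑ j : Fin (d - 1), a j • v j) + k • (q • e0) := by
      rw [hsum, hφa, smul_smul, mul_comm k q]
      abel
    rw [key]
    exact add_mem (sum_mem fun j _ => AddSubgroup.zsmul_mem _ (hvmem j) _)
      (AddSubgroup.zsmul_mem _ hqe0 _)
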